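/- For every μ > 0, γ ∈ ℝ, λ ∈ ℝ and n ∈ ℕ, the Specialized Chihara polynomials satisfy the three-term recurrence λ·P_n(λ;μ,γ) = √([n+1]_μ)·P_{n+1}(λ;μ,γ) + γ(−1)^n·P_n(λ;μ,γ) + √([n]_μ)·P_{n−1}(λ;μ,γ), where P_{−1}(λ;μ,γ) := 0. -/

import Mathlib

noncomputable section

open Real MeasureTheory

namespace MinusOne

/-- The μ-number `[n]_μ = n + (1 - (-1)^n) μ`. -/
def munum (μ : ℝ) (n : ℕ) : ℝ := n + (1 - (-1 : ℝ) ^ n) * μ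

/-- The μ-factorial `[n]_μ! = [1]_μ [2]_μ ⋯ [n]_μ`. -/
def mufact (μ : ℝ) (n : ℕ) : ℝ := ∏ k ∈ Finset.range n, munum μ (k + 1)

/-- Pochhammer symbol `(a)_k = a (a+1) ⋯ (a+k-1)`. -/
def poch (a : ℝ) (k : ℕ) : ℝ := ∏ i ∈ Finset.range k, (a + i)

/-- Laguerre polynomial `L_n^{(α)}(x)`. -/
def laguerre (α : ℝ) (n : ℕ) (x : ℝ) : ℝ :=
  (poch (α + 1) n / (Nat.factorial n : ℝ)) *
    ∑ k ∈ Finset.range (n + 1),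
      poch (-(n : ℝ)) k / (poch (α + 1) k * (Nat.factorial k : ℝ)) * x ^ k

/-- Specialized Chihara polynomials `P_n(x; μ, γ)`. -/
def P (μ γ : ℝ) (n : ℕ) (x : ℝ) : ℝ :=
  if n % 2 = 0 then
    (-1 : ℝ) ^ (n / 2) *
      Real.sqrt ((Nat.factorial (n / 2) : ℝ) * Real.Gamma (μ + 1/2) /
        Real.Gamma (((n / 2 : ℕ) : ℝ) + μ + 1/2)) *
      laguerre (μ - 1/2) (n / 2) ((x ^ 2 - γ ^ 2) / 2)
  else
    (-1 : ℝ) ^ (n / 2) *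
      Real.sqrt ((Nat.factorial (n / 2) : ℝ) * Real.Gamma (μ + 3/2) /
        Real.Gamma (((n / 2 : ℕ) : ℝ) + μ + 3/2)) *
      ((x - γ) / Real.sqrt (2 * μ + 1)) *
      laguerre (μ + 1/2) (n / 2) ((x ^ 2 - γ ^ 2) / 2)

/-- Chihara weight function `w(x; μ, γ)`. -/
def w (μ γ : ℝ) (x : ℝ) : ℝ :=
  Real.sign x * (x + γ) * ((x ^ 2 - γ ^ 2) / 2) ^ (μ - 1/2) *
    Real.exp (-((x ^ 2 - γ ^ 2) / 2))

/-- The set `F(γ) = (-∞, -|γ|) ∪ (|γ|, ∞)`. -/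
def Fset (γ : ℝ) : Set ℝ := Set.Iio (-|γ|) ∪ Set.Ioi (|γ|)

/-- Normalized Chihara weight `W = w / (2 Γ(μ+1/2))`. -/
def Wn (μ γ : ℝ) (x : ℝ) : ℝ := w μ γ x / (2 * Real.Gamma (μ + 1/2))

/-- The measure `W(x; μ, γ) dx` on `F(γ)`. -/
def meas1 (μ γ : ℝ) : Measure ℝ :=
  (volume.restrict (Fset γ)).withDensity fun x => ENNReal.ofReal (Wn μ γ x)

/-- The region `G = {|λ2| > |λ1| > |c|}`. -/
def Gset (c : ℝ) : Set (ℝ × ℝ) := {p : ℝ × ℝ | |c| < |p.1| ∧ |p.1| < |p.2|}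

/-- The measure `W(λ1; μ1, c ε1) W(λ2; μ2, λ1 ε2) dλ1 dλ2` on `G`. -/
def meas2 (μ1 μ2 c ε1 ε2 : ℝ) : Measure (ℝ × ℝ) :=
  ((volume : Measure (ℝ × ℝ)).restrict (Gset c)).withDensity
    fun p => ENNReal.ofReal (Wn μ1 (c * ε1) p.1 * Wn μ2 (p.1 * ε2) p.2)

/-- The region `G⁽³⁾ = {|λ3| > |λ2| > |λ1| > |c|}`. -/
def G3set (c : ℝ) : Set (ℝ × ℝ × ℝ) :=
  {p : ℝ × ℝ × ℝ | |c| < |p.1| ∧ |p.1| < |p.2.1| ∧ |p.2.1| < |p.2.2|}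

/-- The three-variable measure on `G⁽³⁾`. -/
def meas3 (μ1 μ2 μ3 c ε1 ε2 ε3 : ℝ) : Measure (ℝ × ℝ × ℝ) :=
  ((volume : Measure (ℝ × ℝ × ℝ)).restrict (G3set c)).withDensity
    fun p => ENNReal.ofReal
      (Wn μ1 (c * ε1) p.1 * Wn μ2 (p.1 * ε2) p.2.1 * Wn μ3 (p.2.1 * ε3) p.2.2)

/-- Big −1 Jacobi polynomials `J_n(x; a, b, c)`. -/
def J (a b c : ℝ) (n : ℕ) (x : ℝ) : ℝ :=
  if n % 2 = 0 then
    (∑ k ∈ Finset.range (n + 1),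
       poch (-(n : ℝ) / 2) k * poch (((n : ℝ) + a + b + 2) / 2) k /
         (poch ((a + 1) / 2) k * (Nat.factorial k : ℝ)) * ((1 - x ^ 2) / (1 - c ^ 2)) ^ k)
    + ((n : ℝ) * (1 - x) / ((1 + c) * (a + 1))) *
      ∑ k ∈ Finset.range (n + 1),
        poch (1 - (n : ℝ) / 2) k * poch (((n : ℝ) + a + b + 2) / 2) k /
          (poch ((a + 3) / 2) k * (Nat.factorial k : ℝ)) * ((1 - x ^ 2) / (1 - c ^ 2)) ^ k
  else
    (∑ k ∈ Finset.range (n + 1),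
       poch (-((n : ℝ) - 1) / 2) k * poch (((n : ℝ) + a + b + 1) / 2) k /
         (poch ((a + 1) / 2) k * (Nat.factorial k : ℝ)) * ((1 - x ^ 2) / (1 - c ^ 2)) ^ k)
    - (((n : ℝ) + a + b + 1) * (1 - x) / ((1 + c) * (a + 1))) *
      ∑ k ∈ Finset.range (n + 1),
        poch (-((n : ℝ) - 1) / 2) k * poch (((n : ℝ) + a + b + 3) / 2) k /
          (poch ((a + 3) / 2) k * (Nat.factorial k : ℝ)) * ((1 - x ^ 2) / (1 - c ^ 2)) ^ k

/-- Recurrence coefficient `A_n` for the Big −1 Jacobi polynomials. -/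
def JA (a b c : ℝ) (n : ℕ) : ℝ :=
  if n % 2 = 0 then ((n : ℝ) + a + 1) * (c + 1) / (2 * n + a + b + 2)
  else (1 - c) * ((n : ℝ) + a + b + 1) / (2 * n + a + b + 2)

/-- Recurrence coefficient `C_n` for the Big −1 Jacobi polynomials. -/
def JC (a b c : ℝ) (n : ℕ) : ℝ :=
  if n % 2 = 0 then (n : ℝ) * (1 - c) / (2 * n + a + b)
  else ((n : ℝ) + b) * (1 + c) / (2 * n + a + b)

/-- Big −1 Jacobi weight `ω(x; a, b, c)`. -/
def Jweight (a b c : ℝ) (x : ℝ) : ℝ :=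
  Real.sign x * (1 + x) * (x - c) * (x ^ 2 - c ^ 2) ^ ((b - 1) / 2) *
    (1 - x ^ 2) ^ ((a - 1) / 2)

/-- Big −1 Jacobi normalization `h_n(a, b)`. -/
def hJ (a b : ℝ) (n : ℕ) : ℝ :=
  if n % 2 = 0 then
    2 * Real.Gamma (((n : ℝ) + b + 1) / 2) * Real.Gamma (((n : ℝ) + a + 3) / 2) *
      (Nat.factorial (n / 2) : ℝ) /
      (((n : ℝ) + a + 1) * Real.Gamma (((n : ℝ) + a + b + 2) / 2) * (poch ((a + 1) / 2) (n / 2)) ^ 2)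
  else
    ((n : ℝ) + a + b + 1) * Real.Gamma (((n : ℝ) + b + 2) / 2) * Real.Gamma (((n : ℝ) + a + 2) / 2) *
      (Nat.factorial ((n - 1) / 2) : ℝ) /
      (2 * Real.Gamma (((n : ℝ) + a + b + 3) / 2) * (poch ((a + 1) / 2) ((n + 1) / 2)) ^ 2)

/-- Coupling factor `K_j(y; ν2, ν1; t, σ)`. -/
def K (ν2 ν1 t σ : ℝ) (j : ℕ) (y : ℝ) : ℝ :=
  Real.sqrt (((y ^ 2 - t ^ 2) / 2) ^ j * ((y - t * σ) / (y - (-1 : ℝ) ^ j * t * σ)) *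
    Real.Gamma (ν1 + 1/2) * Real.Gamma (ν2 + 1/2) /
    (Real.Gamma (ν1 + ν2 + j + 1) * hJ (2 * ν2) (2 * ν1) j))

/-- Dual −1 Hahn polynomials `R_n(x; η, ξ, N)`. -/
def Rdual (η ξ : ℝ) (N : ℕ) (n : ℕ) (x : ℝ) : ℝ :=
  if N % 2 = 0 then
    if n % 2 = 0 then
      (16 : ℝ) ^ (n / 2) * poch (-(N : ℝ) / 2) (n / 2) * poch ((1 - 2 * η - N) / 2) (n / 2) *
        ∑ k ∈ Finset.range (n / 2 + 1),
          poch (-((n : ℝ) / 2)) k * poch (-(η + ξ + N) / 2 + (x + 1) / 4) k *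
            poch (-(η + ξ + N) / 2 - (x + 1) / 4) k /
            (poch (-(N : ℝ) / 2) k * poch ((1 - 2 * η - N) / 2) k * (Nat.factorial k : ℝ))
    else
      (16 : ℝ) ^ (n / 2) * poch (1 - (N : ℝ) / 2) (n / 2) * poch ((1 - 2 * η - N) / 2) (n / 2) *
        (x + 2 * η + 2 * ξ + 1) *
        ∑ k ∈ Finset.range (n / 2 + 1),
          poch (-(((n : ℝ) - 1) / 2)) k * poch (-(η + ξ + N) / 2 + (x + 1) / 4) k *
            poch (-(η + ξ + N) / 2 - (x + 1) / 4) k /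
            (poch (1 - (N : ℝ) / 2) k * poch ((1 - 2 * η - N) / 2) k * (Nat.factorial k : ℝ))
  else
    if n % 2 = 0 then
      (16 : ℝ) ^ (n / 2) * poch ((1 - (N : ℝ)) / 2) (n / 2) * poch ((2 * ξ + 1) / 2) (n / 2) *
        ∑ k ∈ Finset.range (n / 2 + 1),
          poch (-((n : ℝ) / 2)) k * poch ((η + ξ + 1) / 2 + (x + 1) / 4) k *
            poch ((η + ξ + 1) / 2 - (x + 1) / 4) k /
            (poch ((1 - (N : ℝ)) / 2) k * poch ((2 * ξ + 1) / 2) k * (Nat.factorial k : ℝ))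
    else
      (16 : ℝ) ^ (n / 2) * poch ((1 - (N : ℝ)) / 2) (n / 2) * poch ((2 * ξ + 3) / 2) (n / 2) *
        (x + 2 * ξ - 2 * η + 1) *
        ∑ k ∈ Finset.range (n / 2 + 1),
          poch (-(((n : ℝ) - 1) / 2)) k * poch ((η + ξ + 1) / 2 + (x + 1) / 4) k *
            poch ((η + ξ + 1) / 2 - (x + 1) / 4) k /
            (poch ((1 - (N : ℝ)) / 2) k * poch ((2 * ξ + 3) / 2) k * (Nat.factorial k : ℝ))

/-- Grid points `y_s` for the dual −1 Hahn polynomials. -/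
def ygrid (η ξ : ℝ) (N : ℕ) (s : ℕ) : ℝ :=
  if N % 2 = 0 then (-1 : ℝ) ^ s * (2 * s - 2 * η - 2 * ξ - 2 * N - 1)
  else (-1 : ℝ) ^ s * (2 * s + 2 * η + 2 * ξ + 1)

/-- Weights `ϖ_s(η, ξ, N)` for the dual −1 Hahn polynomials. -/
def varpi (η ξ : ℝ) (N : ℕ) (s : ℕ) : ℝ :=
  if N % 2 = 0 then
    if s % 2 = 0 then
      (-1 : ℝ) ^ (s / 2) * poch (-(N : ℝ) / 2) (s / 2) * poch (-(N : ℝ) / 2 - η + 1/2) (s / 2) *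
        poch (-(N : ℝ) - η - ξ) (s / 2) /
        ((Nat.factorial (s / 2) : ℝ) * poch (-(N : ℝ) / 2 - ξ + 1/2) (s / 2) *
          poch (-(N : ℝ) / 2 - η - ξ) (s / 2))
    else
      (-1 : ℝ) ^ (s / 2) * poch (-(N : ℝ) / 2) (s / 2 + 1) * poch (-(N : ℝ) / 2 - η + 1/2) (s / 2) *
        poch (-(N : ℝ) - η - ξ) (s / 2) /
        ((Nat.factorial (s / 2) : ℝ) * poch (-(N : ℝ) / 2 - ξ + 1/2) (s / 2) *
          poch (-(N : ℝ) / 2 - η - ξ) (s / 2 + 1))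
  else
    if s % 2 = 0 then
      (-1 : ℝ) ^ (s / 2) * poch ((1 - (N : ℝ)) / 2) (s / 2) * poch (ξ + 1/2) (s / 2) *
        poch (η + ξ + 1) (s / 2) /
        ((Nat.factorial (s / 2) : ℝ) * poch (η + 1/2) (s / 2) *
          poch (((N : ℝ) + 3) / 2 + η + ξ) (s / 2))
    else
      (-1 : ℝ) ^ (s / 2) * poch ((1 - (N : ℝ)) / 2) (s / 2) * poch (ξ + 1/2) (s / 2 + 1) *
        poch (η + ξ + 1) (s / 2) /
        ((Nat.factorial (s / 2) : ℝ) * poch (η + 1/2) (s / 2 + 1) *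
          poch (((N : ℝ) + 3) / 2 + η + ξ) (s / 2))

/-- Normalizations `ν_n(η, ξ, N)` for the dual −1 Hahn polynomials. -/
def nuDual (η ξ : ℝ) (N : ℕ) (n : ℕ) : ℝ :=
  if N % 2 = 0 then
    if n % 2 = 0 then
      (16 : ℝ) ^ n * (Nat.factorial (n / 2) : ℝ) * poch (-(N : ℝ) / 2) (n / 2) *
        poch (ξ + 1/2) (n / 2) * poch ((-(N : ℝ) - 2 * η + 1) / 2) (n / 2) *
        (poch (-(N : ℝ) - η - ξ) (N / 2) / poch ((-(N : ℝ) - 2 * ξ + 1) / 2) (N / 2))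
    else
      -(16 : ℝ) ^ n * (Nat.factorial (n / 2) : ℝ) * poch (-(N : ℝ) / 2) (n / 2 + 1) *
        poch (ξ + 1/2) (n / 2 + 1) * poch ((-(N : ℝ) - 2 * η + 1) / 2) (n / 2) *
        (poch (-(N : ℝ) - η - ξ) (N / 2) / poch ((-(N : ℝ) - 2 * ξ + 1) / 2) (N / 2))
  else
    if n % 2 = 0 then
      (16 : ℝ) ^ n * (Nat.factorial (n / 2) : ℝ) * poch ((1 - (N : ℝ)) / 2) (n / 2) *
        poch (ξ + 1/2) (n / 2) * poch (-(N : ℝ) / 2 - η) (n / 2) *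
        (poch (η + ξ + 1) ((N + 1) / 2) / poch (η + 1/2) ((N + 1) / 2))
    else
      -(16 : ℝ) ^ n * (Nat.factorial (n / 2) : ℝ) * poch ((1 - (N : ℝ)) / 2) (n / 2) *
        poch (ξ + 1/2) (n / 2 + 1) * poch (-(N : ℝ) / 2 - η) (n / 2 + 1) *
        (poch (η + ξ + 1) ((N + 1) / 2) / poch (η + 1/2) ((N + 1) / 2))

/-- The points `z_s = (-1)^{s+N+1} (2s + 2η + 2ξ + 1)`. -/
def zgrid (η ξ : ℝ) (N : ℕ) (s : ℕ) : ℝ :=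
  (-1 : ℝ) ^ (s + N + 1) * (2 * s + 2 * η + 2 * ξ + 1)

/-- The reversed weights `ρ_s(η, ξ, N)`. -/
def rhoDual (η ξ : ℝ) (N : ℕ) (s : ℕ) : ℝ :=
  if N % 2 = 0 then varpi η ξ N (N - s) else varpi η ξ N s

/-- The quantity `ν_0(η, ξ, N)`. -/
def nu0 (η ξ : ℝ) (N : ℕ) : ℝ :=
  if N % 2 = 0 then poch (-(N : ℝ) - η - ξ) (N / 2) / poch ((-(N : ℝ) - 2 * ξ + 1) / 2) (N / 2)
  else poch (η + ξ + 1) ((N + 1) / 2) / poch (η + 1/2) ((N + 1) / 2)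

/-- Bannai–Ito recurrence coefficient `A_n`. -/
def BIA (ρ1 ρ2 r1 r2 : ℝ) (n : ℕ) : ℝ :=
  if n % 2 = 0 then
    ((n : ℝ) + 2 * ρ1 - 2 * r1 + 1) * ((n : ℝ) + 2 * ρ1 - 2 * r2 + 1) /
      (4 * ((n : ℝ) + (ρ1 + ρ2 - r1 - r2) + 1))
  else
    ((n : ℝ) + 2 * (ρ1 + ρ2 - r1 - r2) + 1) * ((n : ℝ) + 2 * ρ1 + 2 * ρ2 + 1) /
      (4 * ((n : ℝ) + (ρ1 + ρ2 - r1 - r2) + 1))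

/-- Bannai–Ito recurrence coefficient `C_n`. -/
def BIC (ρ1 ρ2 r1 r2 : ℝ) (n : ℕ) : ℝ :=
  if n % 2 = 0 then
    -((n : ℝ) * ((n : ℝ) - 2 * r1 - 2 * r2)) / (4 * ((n : ℝ) + (ρ1 + ρ2 - r1 - r2)))
  else
    -(((n : ℝ) + 2 * ρ2 - 2 * r2) * ((n : ℝ) + 2 * ρ2 - 2 * r1)) /
      (4 * ((n : ℝ) + (ρ1 + ρ2 - r1 - r2)))

/-- Monic Bannai–Ito polynomials, defined by the three-term recurrence. -/
def BI (ρ1 ρ2 r1 r2 : ℝ) : ℕ → ℝ → ℝ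
  | 0 => fun _ => 1
  | 1 => fun x => x - (ρ1 - BIA ρ1 ρ2 r1 r2 0 - BIC ρ1 ρ2 r1 r2 0)
  | (n + 2) => fun x =>
      (x - (ρ1 - BIA ρ1 ρ2 r1 r2 (n + 1) - BIC ρ1 ρ2 r1 r2 (n + 1))) * BI ρ1 ρ2 r1 r2 (n + 1) x
      - BIA ρ1 ρ2 r1 r2 n * BIC ρ1 ρ2 r1 r2 (n + 1) * BI ρ1 ρ2 r1 r2 n x

/-- Bannai–Ito normalization `η_n`. -/
def BIeta (ρ1 ρ2 r1 r2 : ℝ) (n : ℕ) : ℝ :=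
  (-1 : ℝ) ^ n * poch (ρ1 - r1 + 1/2) (n / 2 + n % 2) * poch (ρ2 - r1 + 1/2) (n / 2 + n % 2) *
    poch (1 - r1 - r2) (n / 2) /
    poch (((n / 2 : ℕ) : ℝ) + (ρ1 + ρ2 - r1 - r2) + 1) (n / 2 + n % 2)

/-- Bannai–Ito grid points `x_k`. -/
def BIx (ρ1 : ℝ) (k : ℕ) : ℝ := (-1 : ℝ) ^ k * ((k : ℝ) / 2 + ρ1 + 1/4) - 1/4

/-- Bannai–Ito weights `w_k`. -/
def BIw (ρ1 ρ2 r1 r2 : ℝ) (k : ℕ) : ℝ :=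
  ((-1 : ℝ) ^ k / (Nat.factorial (k / 2) : ℝ)) *
    (poch (ρ1 - r1 + 1/2) (k / 2 + k % 2) * poch (ρ1 - r2 + 1/2) (k / 2 + k % 2) *
      poch (ρ1 + ρ2 + 1) (k / 2) * poch (2 * ρ1 + 1) (k / 2)) /
    (poch (ρ1 + r1 + 1/2) (k / 2 + k % 2) * poch (ρ1 + r2 + 1/2) (k / 2 + k % 2) *
      poch (ρ1 - ρ2 + 1) (k / 2))

/-- Bannai–Ito normalization `h_n` for even truncation parameter `N = 2 Ne`. -/
def BIhEven (ρ1 ρ2 r1 r2 : ℝ) (Ne : ℕ) (n : ℕ) : ℝ :=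
  (Nat.factorial (n / 2) : ℝ) * (Nat.factorial Ne : ℝ) * poch (1 + 2 * ρ1) Ne *
    poch (1 + ρ1 + ρ2) (n / 2) *
    poch (1 + ((n / 2 : ℕ) : ℝ) + (ρ1 + ρ2 - r1 - r2)) (Ne - n / 2) *
    poch (1/2 + ρ1 - r1) (n / 2 + n % 2) * poch (1/2 + ρ2 - r1) (n / 2 + n % 2) /
  ((Nat.factorial (Ne - n / 2 - n % 2) : ℝ) * poch (1/2 + ρ1 + r1) (Ne - n / 2) *
    poch (1/2 + ((n / 2 : ℕ) : ℝ) + ((n % 2 : ℕ) : ℝ) + ρ2 - r2) (Ne - n / 2 - n % 2) *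
    (poch (1 + (n : ℝ) + (ρ1 + ρ2 - r1 - r2)) (n / 2 + n % 2)) ^ 2)

/-- Bannai–Ito normalization `h_n` for odd truncation parameter `N = 2 Ne + 1`. -/
def BIhOdd (ρ1 ρ2 r1 r2 : ℝ) (Ne : ℕ) (n : ℕ) : ℝ :=
  (Nat.factorial (n / 2) : ℝ) * (Nat.factorial Ne : ℝ) * poch (1 + 2 * ρ1) (Ne + 1) *
    poch (1 - r1 - r2) (n / 2) *
    poch (1 + ((n / 2 : ℕ) : ℝ) + (ρ1 + ρ2 - r1 - r2)) (Ne + 1 - n / 2) *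
    poch (1/2 + ρ1 - r1) (n / 2 + n % 2) * poch (1/2 + ρ1 - r2) (n / 2 + n % 2) /
  ((Nat.factorial (Ne - n / 2) : ℝ) * poch (1/2 + ρ1 + r1) (Ne + 1 - n / 2 - n % 2) *
    poch (1/2 + ((n / 2 : ℕ) : ℝ) + ((n % 2 : ℕ) : ℝ) + ρ2 - r2) (Ne + 1 - n / 2 - n % 2) *
    (poch (1 + (n : ℝ) + (ρ1 + ρ2 - r1 - r2)) (n / 2 + n % 2)) ^ 2)

/-- Bannai–Ito normalization `h_n` with truncation parameter `N`. -/
def BIh (ρ1 ρ2 r1 r2 : ℝ) (N : ℕ) (n : ℕ) : ℝ :=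
  if N % 2 = 0 then BIhEven ρ1 ρ2 r1 r2 (N / 2) n else BIhOdd ρ1 ρ2 r1 r2 (N / 2) n

/-- Phase `φ(n1, n2, j)` of the Clebsch–Gordan coefficients. -/
def cgPhi (n1 n2 j : ℕ) : ℕ := n1 * (n1 - 1) / 2 + j * (j + 1) / 2 + n1 * (n1 + n2 + 1)

/-- Clebsch–Gordan coefficients `C^{N,j}_{n1,n2}` of `osp(1|2)`. -/
def CG (μ1 μ2 ε2 : ℝ) (n1 n2 j : ℕ) : ℝ :=
  (-1 : ℝ) ^ (cgPhi n1 n2 j) * (ε2 / 2) ^ n1 *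
    Real.sqrt (mufact μ2 n2 * rhoDual μ2 μ1 (n1 + n2) j /
      (mufact μ1 n1 * mufact μ2 (n1 + n2) * nu0 μ2 μ1 (n1 + n2))) *
    Rdual μ2 μ1 (n1 + n2) n1 (zgrid μ2 μ1 (n1 + n2) j)

/-- Phase `φ` of the Racah coefficients. -/
def racahPhi (j12 j23 j123 : ℕ) : ℕ :=
  j123 * ((j12 - 1) * j12 / 2) + (j123 + 1) * (j23 + (j12 + 1) * j12 / 2)

/-- Racah coefficients of `osp(1|2)` in terms of Bannai–Ito polynomials. -/
def racah (μ1 μ2 μ3 ε3 : ℝ) (j12 j23 j123 : ℕ) : ℝ :=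
  (-1 : ℝ) ^ (racahPhi j12 j23 j123) * ε3 ^ j12 *
    Real.sqrt (BIw ((μ2 + μ3) / 2) ((μ1 + (-1 : ℝ) ^ j123 * (μ1 + μ2 + μ3 + 1 + j123)) / 2)
        ((μ3 - μ2) / 2) (((-1 : ℝ) ^ j123 * (μ1 + μ2 + μ3 + 1 + j123) - μ1) / 2) j23 /
      BIh ((μ2 + μ3) / 2) ((μ1 + (-1 : ℝ) ^ j123 * (μ1 + μ2 + μ3 + 1 + j123)) / 2)
        ((μ3 - μ2) / 2) (((-1 : ℝ) ^ j123 * (μ1 + μ2 + μ3 + 1 + j123) - μ1) / 2) j123 j12) *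
    BI ((μ2 + μ3) / 2) ((μ1 + (-1 : ℝ) ^ j123 * (μ1 + μ2 + μ3 + 1 + j123)) / 2)
      ((μ3 - μ2) / 2) (((-1 : ℝ) ^ j123 * (μ1 + μ2 + μ3 + 1 + j123) - μ1) / 2) j12
      (BIx ((μ2 + μ3) / 2) j23)

/-- The hypergeometric function `₀F₁(; b; x)`. -/
def hyp0F1 (b x : ℝ) : ℝ := ∑' k : ℕ, x ^ k / (poch b k * (Nat.factorial k : ℝ))

/-- Truncated Gauss hypergeometric sum `₂F₁` (used for terminating series). -/
def hyp2F1fin (m : ℕ) (a1 a2 b x : ℝ) : ℝ :=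
  ∑ k ∈ Finset.range m, poch a1 k * poch a2 k / (poch b k * (Nat.factorial k : ℝ)) * x ^ k

/-- The function `f_e(j)` appearing in the bilinear generating function. -/
def fe (μ1 μ2 ε2 z1 z2 : ℝ) (j : ℕ) : ℝ :=
  (-1 : ℝ) ^ (j / 2 + j % 2) * (z2 ^ j / Real.sqrt (mufact μ2 j)) *
    Real.sqrt (poch (1/2 + μ1) (j / 2 + j % 2) /
      poch (((j / 2 : ℕ) : ℝ) + ((j % 2 : ℕ) : ℝ) + 1 + μ1 + μ2) (j / 2 + j % 2)) *
    (hyp2F1fin (j + 1) (-((j / 2 : ℕ) : ℝ)) (1/2 - ((j / 2 : ℕ) : ℝ) - ((j % 2 : ℕ) : ℝ) - μ2)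
        (1/2 + μ1) (-(z1 / z2) ^ 2)
      + ((-1 : ℝ) ^ (j % 2) * z1 * ((j : ℝ) + 2 * μ2 * ((j % 2 : ℕ) : ℝ)) /
          (z2 * ε2 * (1 + 2 * μ1))) *
        hyp2F1fin (j + 1) (1 - ((j / 2 : ℕ) : ℝ) - ((j % 2 : ℕ) : ℝ)) (1/2 - ((j / 2 : ℕ) : ℝ) - μ2)
          (3/2 + μ1) (-(z1 / z2) ^ 2))

/-- The function `f_o(j)` appearing in the bilinear generating function. -/
def fo (μ1 μ2 ε2 z1 z2 : ℝ) (j : ℕ) : ℝ :=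
  (-1 : ℝ) ^ (j / 2 + j % 2) * (Real.sqrt ((z1 / z2) ^ 2 + 1))⁻¹ *
    (z2 ^ j / Real.sqrt (mufact μ2 j)) *
    Real.sqrt (poch (1/2 + μ1) (j / 2 + j % 2) /
      poch (((j / 2 : ℕ) : ℝ) + ((j % 2 : ℕ) : ℝ) + 1 + μ1 + μ2) (j / 2 + j % 2)) *
    (hyp2F1fin (j + 1) (-((j / 2 : ℕ) : ℝ) - ((j % 2 : ℕ) : ℝ)) (-1/2 - ((j / 2 : ℕ) : ℝ) - μ2)
        (1/2 + μ1) (-(z1 / z2) ^ 2)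
      + ((-1 : ℝ) ^ (j % 2) * z1 * ((j : ℝ) + 1 + 2 * μ1 + 2 * μ2 * ((j % 2 : ℕ) : ℝ)) /
          (z2 * ε2 * (1 + 2 * μ1))) *
        hyp2F1fin (j + 1) (-((j / 2 : ℕ) : ℝ)) (1/2 - ((j / 2 : ℕ) : ℝ) - ((j % 2 : ℕ) : ℝ) - μ2)
          (3/2 + μ1) (-(z1 / z2) ^ 2))

/-- Dunkl realization: `J₊`. -/
def Jp (f : ℝ → ℝ) : ℝ → ℝ := fun z => z * f z

/-- Dunkl realization: `J₋` (the Dunkl derivative). -/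
def Jm (μ : ℝ) (f : ℝ → ℝ) : ℝ → ℝ := fun z => deriv f z + (μ / z) * (f z - f (-z))

/-- Dunkl realization: `J₀`. -/
def J0op (μ : ℝ) (f : ℝ → ℝ) : ℝ → ℝ := fun z => z * deriv f z + (μ + 1/2) * f z

/-- Reflection operator `R`. -/
def Rop (f : ℝ → ℝ) : ℝ → ℝ := fun z => f (-z)

lemma poch_zero (a : ℝ) : poch a 0 = 1 := by simp [poch]

lemma poch_succ (a : ℝ) (k : ℕ) : poch a (k+1) = poch a k * (a + k) := by
  simp [poch, Finset.prod_range_succ]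

lemma poch_succ' (a : ℝ) (k : ℕ) : poch a (k+1) = a * poch (a+1) k := by
  induction k with
  | zero => simp [poch]
  | succ k ih =>
    rw [poch_succ, ih, poch_succ]
    push_cast; ring

lemma poch_rel (a : ℝ) (k : ℕ) : poch a k * (a + k) = a * poch (a+1) k := by
  rw [← poch_succ, poch_succ']

lemma poch_pos {a : ℝ} (ha : 0 < a) (k : ℕ) : 0 < poch a k := by
  apply Finset.prod_pos
  intro i _
  positivity

lemma poch_nat_neg (m k : ℕ) (h : m < k) : poch (-(m:ℝ)) k = 0 := by
  apply Finset.prod_eq_zero (Finset.mem_range.mpr h)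
  simp

lemma lagA_term (α x : ℝ) (hα : 0 < α + 1) (m k : ℕ) :
    poch (α+1) (m+1) / (Nat.factorial (m+1) : ℝ) *
      (poch (-((m+1 : ℕ):ℝ)) k / (poch (α+1) k * (Nat.factorial k : ℝ)) * x^k)
    = poch (α+1+1) (m+1) / (Nat.factorial (m+1) : ℝ) *
      (poch (-((m+1 : ℕ):ℝ)) k / (poch (α+1+1) k * (Nat.factorial k : ℝ)) * x^k)
    - poch (α+1+1) m / (Nat.factorial m : ℝ) *
      (poch (-((m : ℕ):ℝ)) k / (poch (α+1+1) k * (Nat.factorial k : ℝ)) * x^k) := by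
  have hα2 : (0:ℝ) < α + 1 + 1 := by linarith
  have hA1 := (poch_pos hα k).ne'
  have hA2 := (poch_pos hα2 k).ne'
  have r1 : poch (α+1) k * (α+1+k) = (α+1) * poch (α+1+1) k := poch_rel _ _
  have r2 : poch (-((m+1:ℕ):ℝ)) k * (-((m+1:ℕ):ℝ) + k) =
      (-((m+1:ℕ):ℝ)) * poch (-((m+1:ℕ):ℝ)+1) k := poch_rel _ _
  have e : (-((m+1:ℕ):ℝ)+1) = -((m:ℕ):ℝ) := by push_cast; ring
  rw [e] at r2
  have r3 : poch (α+1) (m+1) = (α+1) * poch (α+1+1) m := poch_succ' _ _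
  have r4 : poch (α+1+1) (m+1) = poch (α+1+1) m * (α+1+1+m) := poch_succ _ _
  have hf : (Nat.factorial (m+1) : ℝ) = ((m:ℝ)+1) * (Nat.factorial m : ℝ) := by
    push_cast [Nat.factorial_succ]; ring
  have hc : ((m+1:ℕ):ℝ) = (m:ℝ)+1 := by push_cast; ring
  rw [hc] at r2
  rw [r3, r4, hf, hc]
  have hfm : (Nat.factorial m : ℝ) ≠ 0 := (Nat.cast_pos.mpr (Nat.factorial_pos m)).ne'
  have hfk : (Nat.factorial k : ℝ) ≠ 0 := (Nat.cast_pos.mpr (Nat.factorial_pos k)).ne'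
  have hm1' : ((m:ℝ)+1) ≠ 0 := by positivity
  set A1 := poch (α+1) k
  set A2 := poch (α+1+1) k
  set Pm := poch (α+1+1) m
  set Q := poch (-((m:ℝ)+1)) k
  set Q' := poch (-((m:ℕ):ℝ)) k
  have hαk : α + 1 + (k:ℝ) ≠ 0 := by positivity
  have hmne : (-((m:ℝ)+1)) ≠ 0 := by intro h; nlinarith [Nat.cast_nonneg (α := ℝ) m]
  have hQ' : Q' = Q * (((m:ℝ)+1) - k) / (((m:ℝ)+1)) := by
    rw [eq_div_iff hm1']; nlinarith [r2]
  have hA1' : A1 = (α+1) * A2 / (α+1+(k:ℝ)) := by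
    rw [eq_div_iff hαk]; linarith [r1]
  rw [hQ', hA1']
  have h1 : (α+1) ≠ 0 := hα.ne'
  field_simp
  ring

lemma lagA (α x : ℝ) (hα : 0 < α + 1) (m : ℕ) :
    laguerre α (m+1) x = laguerre (α+1) (m+1) x - laguerre (α+1) m x := by
  rw [laguerre, laguerre, laguerre, Finset.mul_sum, Finset.mul_sum, Finset.mul_sum]
  have hz : poch (α+1+1) m / (Nat.factorial m : ℝ) *
      (poch (-((m:ℕ):ℝ)) (m+1) / (poch (α+1+1) (m+1) * (Nat.factorial (m+1) : ℝ)) * x^(m+1)) = 0 := by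
    rw [poch_nat_neg m (m+1) (by omega)]; ring
  calc ∑ k ∈ Finset.range (m+1+1), poch (α+1) (m+1) / (Nat.factorial (m+1) : ℝ) *
        (poch (-((m+1:ℕ):ℝ)) k / (poch (α+1) k * (Nat.factorial k : ℝ)) * x^k)
      = ∑ k ∈ Finset.range (m+1+1),
          (poch (α+1+1) (m+1) / (Nat.factorial (m+1) : ℝ) *
            (poch (-((m+1:ℕ):ℝ)) k / (poch (α+1+1) k * (Nat.factorial k : ℝ)) * x^k)
          - poch (α+1+1) m / (Nat.factorial m : ℝ) *
            (poch (-((m:ℕ):ℝ)) k / (poch (α+1+1) k * (Nat.factorial k : ℝ)) * x^k)) := by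
        exact Finset.sum_congr rfl fun k _ => lagA_term α x hα m k
    _ = (∑ k ∈ Finset.range (m+1+1), poch (α+1+1) (m+1) / (Nat.factorial (m+1) : ℝ) *
            (poch (-((m+1:ℕ):ℝ)) k / (poch (α+1+1) k * (Nat.factorial k : ℝ)) * x^k))
        - ∑ k ∈ Finset.range (m+1+1), poch (α+1+1) m / (Nat.factorial m : ℝ) *
            (poch (-((m:ℕ):ℝ)) k / (poch (α+1+1) k * (Nat.factorial k : ℝ)) * x^k) :=
        Finset.sum_sub_distrib _ _
    _ = _ := by
        have hs : (∑ k ∈ Finset.range (m+1+1), poch (α+1+1) m / (Nat.factorial m : ℝ) *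
              (poch (-((m:ℕ):ℝ)) k / (poch (α+1+1) k * (Nat.factorial k : ℝ)) * x^k))
            = ∑ k ∈ Finset.range (m+1), poch (α+1+1) m / (Nat.factorial m : ℝ) *
              (poch (-((m:ℕ):ℝ)) k / (poch (α+1+1) k * (Nat.factorial k : ℝ)) * x^k) := by
          rw [Finset.sum_range_succ, hz, add_zero]
        rw [hs]

lemma lagB_term (α x : ℝ) (hα : 0 < α + 1) (m k : ℕ) :
    ((m:ℝ)+α+1) * (poch (α+1) m / (Nat.factorial m : ℝ) *
      (poch (-((m:ℕ):ℝ)) (k+1) / (poch (α+1) (k+1) * (Nat.factorial (k+1) : ℝ)) * x^(k+1)))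
    - ((m:ℝ)+1) * (poch (α+1) (m+1) / (Nat.factorial (m+1) : ℝ) *
      (poch (-((m+1:ℕ):ℝ)) (k+1) / (poch (α+1) (k+1) * (Nat.factorial (k+1) : ℝ)) * x^(k+1)))
    = poch (α+1+1) m / (Nat.factorial m : ℝ) *
      (poch (-((m:ℕ):ℝ)) k / (poch (α+1+1) k * (Nat.factorial k : ℝ)) * x^k) * x := by
  have hα2 : (0:ℝ) < α + 1 + 1 := by linarith
  have hA2 := (poch_pos hα2 k).ne'
  have r1 : poch (-((m:ℕ):ℝ)) (k+1) = poch (-((m:ℕ):ℝ)) k * (-((m:ℕ):ℝ) + k) := poch_succ _ _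
  have r2 : poch (-((m+1:ℕ):ℝ)) (k+1) = (-((m+1:ℕ):ℝ)) * poch (-((m+1:ℕ):ℝ)+1) k := poch_succ' _ _
  have e : (-((m+1:ℕ):ℝ)+1) = -((m:ℕ):ℝ) := by push_cast; ring
  rw [e] at r2
  have r3 : poch (α+1) (k+1) = (α+1) * poch (α+1+1) k := poch_succ' _ _
  have r4 : poch (α+1) (m+1) = poch (α+1) m * (α+1+m) := poch_succ _ _
  have r5 : poch (α+1+1) m = poch (α+1) m * (α+1+(m:ℝ)) / (α+1) := by
    rw [eq_div_iff hα.ne']; linarith [poch_rel (α+1) m]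
  have hfk : (Nat.factorial (k+1) : ℝ) = ((k:ℝ)+1) * (Nat.factorial k : ℝ) := by
    push_cast [Nat.factorial_succ]; ring
  have hfm : (Nat.factorial (m+1) : ℝ) = ((m:ℝ)+1) * (Nat.factorial m : ℝ) := by
    push_cast [Nat.factorial_succ]; ring
  have hc : ((m+1:ℕ):ℝ) = (m:ℝ)+1 := by push_cast; ring
  rw [r1, r2, r3, r4, r5, hfk, hfm, hc]
  have hfm' : (Nat.factorial m : ℝ) ≠ 0 := (Nat.cast_pos.mpr (Nat.factorial_pos m)).ne'
  have hfk' : (Nat.factorial k : ℝ) ≠ 0 := (Nat.cast_pos.mpr (Nat.factorial_pos k)).ne'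
  have hm1 : ((m:ℝ)+1) ≠ 0 := by positivity
  have hk1 : ((k:ℝ)+1) ≠ 0 := by positivity
  field_simp
  ring

lemma lagB (α x : ℝ) (hα : 0 < α + 1) (m : ℕ) :
    x * laguerre (α+1) m x =
      ((m:ℝ)+α+1) * laguerre α m x - ((m:ℝ)+1) * laguerre α (m+1) x := by
  rw [laguerre, laguerre, laguerre, Finset.mul_sum, Finset.mul_sum, Finset.mul_sum,
    Finset.mul_sum, Finset.mul_sum, Finset.mul_sum]
  have hz : ((m:ℝ)+α+1) * (poch (α+1) m / (Nat.factorial m : ℝ) *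
      (poch (-((m:ℕ):ℝ)) (m+1) / (poch (α+1) (m+1) * (Nat.factorial (m+1) : ℝ)) * x^(m+1))) = 0 := by
    rw [poch_nat_neg m (m+1) (by omega)]; ring
  have hext : (∑ k ∈ Finset.range (m+1), ((m:ℝ)+α+1) * (poch (α+1) m / (Nat.factorial m : ℝ) *
        (poch (-((m:ℕ):ℝ)) k / (poch (α+1) k * (Nat.factorial k : ℝ)) * x^k)))
      = ∑ k ∈ Finset.range (m+1+1), ((m:ℝ)+α+1) * (poch (α+1) m / (Nat.factorial m : ℝ) *
        (poch (-((m:ℕ):ℝ)) k / (poch (α+1) k * (Nat.factorial k : ℝ)) * x^k)) := by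
    rw [Finset.sum_range_succ _ (m+1), hz, add_zero]
  rw [hext, ← Finset.sum_sub_distrib, Finset.sum_range_succ' _ (m+1)]
  have h0 : ((m:ℝ)+α+1) * (poch (α+1) m / (Nat.factorial m : ℝ) *
        (poch (-((m:ℕ):ℝ)) 0 / (poch (α+1) 0 * (Nat.factorial 0 : ℝ)) * x^0))
      - ((m:ℝ)+1) * (poch (α+1) (m+1) / (Nat.factorial (m+1) : ℝ) *
        (poch (-((m+1:ℕ):ℝ)) 0 / (poch (α+1) 0 * (Nat.factorial 0 : ℝ)) * x^0)) = 0 := by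
    have hfm : (Nat.factorial (m+1) : ℝ) = ((m:ℝ)+1) * (Nat.factorial m : ℝ) := by
      push_cast [Nat.factorial_succ]; ring
    have hfm' : (Nat.factorial m : ℝ) ≠ 0 := (Nat.cast_pos.mpr (Nat.factorial_pos m)).ne'
    have hm1 : ((m:ℝ)+1) ≠ 0 := by positivity
    rw [poch_succ (α+1) m, hfm]
    simp only [poch_zero, Nat.factorial_zero, Nat.cast_one, pow_zero]
    field_simp
    ring
  rw [h0, add_zero]
  refine Finset.sum_congr rfl fun k _ => ?_
  linear_combination (lagB_term α x hα m k).symm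

lemma munum_even (μ : ℝ) (m : ℕ) : munum μ (2*m) = 2*(m:ℝ) := by
  rw [munum, pow_mul]
  norm_num

lemma munum_odd (μ : ℝ) (m : ℕ) : munum μ (2*m+1) = 2*(m:ℝ)+1+2*μ := by
  rw [munum, pow_succ, pow_mul]
  push_cast
  norm_num

lemma laguerre_zero (α x : ℝ) : laguerre α 0 x = 1 := by
  simp [laguerre, poch]

lemma P_even (μ γ x : ℝ) (m : ℕ) :
    P μ γ (2*m) x = (-1 : ℝ)^m *
      Real.sqrt ((Nat.factorial m : ℝ) * Real.Gamma (μ + 1/2) /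
        Real.Gamma (((m:ℕ):ℝ) + μ + 1/2)) *
      laguerre (μ - 1/2) m ((x ^ 2 - γ ^ 2) / 2) := by
  have h1 : (2*m) % 2 = 0 := by omega
  have h2 : (2*m)/2 = m := by omega
  rw [P, if_pos h1, h2]

lemma P_odd (μ γ x : ℝ) (m : ℕ) :
    P μ γ (2*m+1) x = (-1 : ℝ)^m *
      Real.sqrt ((Nat.factorial m : ℝ) * Real.Gamma (μ + 3/2) /
        Real.Gamma (((m:ℕ):ℝ) + μ + 3/2)) *
      ((x - γ) / Real.sqrt (2 * μ + 1)) *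
      laguerre (μ + 1/2) m ((x ^ 2 - γ ^ 2) / 2) := by
  have h1 : (2*m+1) % 2 = 1 := by omega
  have h2 : (2*m+1)/2 = m := by omega
  rw [P, h1, h2]
  norm_num

lemma g1 (μ : ℝ) (hμ : 0 < μ) : Real.Gamma (μ+3/2) = (μ+1/2) * Real.Gamma (μ+1/2) := by
  have h := Real.Gamma_add_one (s := μ+1/2) (by positivity)
  rw [show μ+1/2+1 = μ+3/2 by ring] at h; exact h

lemma g2 (μ : ℝ) (hμ : 0 < μ) (t : ℝ) (ht : 0 ≤ t) :
    Real.Gamma (t+μ+3/2) = (t+μ+1/2) * Real.Gamma (t+μ+1/2) := by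
  have h := Real.Gamma_add_one (s := t+μ+1/2) (by positivity)
  rw [show t+μ+1/2+1 = t+μ+3/2 by ring] at h; exact h

lemma S1 (μ : ℝ) (hμ : 0 < μ) (m : ℕ) :
    Real.sqrt (munum μ (2*m+1)) *
      Real.sqrt ((Nat.factorial m : ℝ) * Real.Gamma (μ+3/2) / Real.Gamma ((m:ℝ)+μ+3/2))
    = Real.sqrt (2*μ+1) *
      Real.sqrt ((Nat.factorial m : ℝ) * Real.Gamma (μ+1/2) / Real.Gamma ((m:ℝ)+μ+1/2)) := by
  have hm0 : (0:ℝ) ≤ (m:ℝ) := Nat.cast_nonneg m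
  rw [munum_odd, ← Real.sqrt_mul (by positivity), ← Real.sqrt_mul (by positivity)]
  congr 1
  rw [g1 μ hμ, g2 μ hμ (m:ℝ) hm0]
  have h1 : Real.Gamma ((m:ℝ)+μ+1/2) ≠ 0 := (Real.Gamma_pos_of_pos (by positivity)).ne'
  have h2 : (m:ℝ)+μ+1/2 ≠ 0 := by positivity
  field_simp
  ring

lemma S2 (μ : ℝ) (hμ : 0 < μ) (m : ℕ) :
    Real.sqrt (munum μ (2*(m+1))) *
      Real.sqrt ((Nat.factorial m : ℝ) * Real.Gamma (μ+3/2) / Real.Gamma ((m:ℝ)+μ+3/2))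
    = Real.sqrt (2*μ+1) *
      Real.sqrt ((Nat.factorial (m+1) : ℝ) * Real.Gamma (μ+1/2) /
        Real.Gamma (((m+1:ℕ):ℝ)+μ+1/2)) := by
  have hm0 : (0:ℝ) ≤ (m:ℝ) := Nat.cast_nonneg m
  rw [munum_even, ← Real.sqrt_mul (by positivity), ← Real.sqrt_mul (by positivity)]
  congr 1
  rw [show (((m+1:ℕ):ℝ)+μ+1/2) = (m:ℝ)+μ+3/2 by push_cast; ring]
  rw [g1 μ hμ, g2 μ hμ (m:ℝ) hm0]
  have h1 : Real.Gamma ((m:ℝ)+μ+1/2) ≠ 0 := (Real.Gamma_pos_of_pos (by positivity)).ne'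
  have h2 : (m:ℝ)+μ+1/2 ≠ 0 := by positivity
  have h3 : (Nat.factorial (m+1) : ℝ) = ((m:ℝ)+1) * (Nat.factorial m : ℝ) := by
    push_cast [Nat.factorial_succ]; ring
  rw [h3]
  push_cast
  field_simp

lemma S3 (μ : ℝ) (hμ : 0 < μ) (m : ℕ) :
    2*((m:ℝ)+μ+1/2) *
      Real.sqrt ((Nat.factorial m : ℝ) * Real.Gamma (μ+3/2) / Real.Gamma ((m:ℝ)+μ+3/2))
    = Real.sqrt (munum μ (2*m+1)) * (Real.sqrt (2*μ+1) *
      Real.sqrt ((Nat.factorial m : ℝ) * Real.Gamma (μ+1/2) / Real.Gamma ((m:ℝ)+μ+1/2))) := by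
  have hm0 : (0:ℝ) ≤ (m:ℝ) := Nat.cast_nonneg m
  rw [munum_odd, show (2*((m:ℝ)+μ+1/2)) = Real.sqrt ((2*((m:ℝ)+μ+1/2))^2) from
    (Real.sqrt_sq (by positivity)).symm]
  rw [← Real.sqrt_mul (by positivity), ← Real.sqrt_mul (by positivity),
    ← Real.sqrt_mul (by positivity)]
  congr 1
  rw [g1 μ hμ, g2 μ hμ (m:ℝ) hm0]
  have h1 : Real.Gamma ((m:ℝ)+μ+1/2) ≠ 0 := (Real.Gamma_pos_of_pos (by positivity)).ne'
  have h2 : (m:ℝ)+μ+1/2 ≠ 0 := by positivity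
  field_simp
  ring

lemma S4 (μ : ℝ) (hμ : 0 < μ) (m : ℕ) :
    2*((m:ℝ)+1) *
      Real.sqrt ((Nat.factorial m : ℝ) * Real.Gamma (μ+3/2) / Real.Gamma ((m:ℝ)+μ+3/2))
    = Real.sqrt (munum μ (2*(m+1))) * (Real.sqrt (2*μ+1) *
      Real.sqrt ((Nat.factorial (m+1) : ℝ) * Real.Gamma (μ+1/2) /
        Real.Gamma (((m+1:ℕ):ℝ)+μ+1/2))) := by
  have hm0 : (0:ℝ) ≤ (m:ℝ) := Nat.cast_nonneg m
  rw [munum_even, show (2*((m:ℝ)+1)) = Real.sqrt ((2*((m:ℝ)+1))^2) from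
    (Real.sqrt_sq (by positivity)).symm]
  rw [← Real.sqrt_mul (by positivity), ← Real.sqrt_mul (by positivity),
    ← Real.sqrt_mul (by positivity)]
  congr 1
  rw [show (((m+1:ℕ):ℝ)+μ+1/2) = (m:ℝ)+μ+3/2 by push_cast; ring]
  rw [g1 μ hμ, g2 μ hμ (m:ℝ) hm0]
  have h1 : Real.Gamma ((m:ℝ)+μ+1/2) ≠ 0 := (Real.Gamma_pos_of_pos (by positivity)).ne'
  have h2 : (m:ℝ)+μ+1/2 ≠ 0 := by positivity
  have h3 : (Nat.factorial (m+1) : ℝ) = ((m:ℝ)+1) * (Nat.factorial m : ℝ) := by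
    push_cast [Nat.factorial_succ]; ring
  rw [h3]
  push_cast
  field_simp

/-- three-term recurrence for the Specialized Chihara polynomials. -/
theorem chihara_recurrence (μ γ lam : ℝ) (hμ : 0 < μ) (n : ℕ) :
    lam * P μ γ n lam =
      Real.sqrt (munum μ (n + 1)) * P μ γ (n + 1) lam
      + γ * (-1 : ℝ) ^ n * P μ γ n lam
      + Real.sqrt (munum μ n) * (if n = 0 then 0 else P μ γ (n - 1) lam) := by
  
  have hα : (0:ℝ) < (μ - 1/2) + 1 := by linarith
  have hr : Real.sqrt (2*μ+1) ≠ 0 := by positivity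
  have earg : μ - 1/2 + 1 = μ + 1/2 := by ring
  have hΓ1 : (0:ℝ) < Real.Gamma (μ+1/2) := Real.Gamma_pos_of_pos (by linarith)
  have hΓ3 : (0:ℝ) < Real.Gamma (μ+3/2) := Real.Gamma_pos_of_pos (by linarith)
  rcases Nat.even_or_odd n with h | h
  · obtain ⟨m, rfl⟩ : ∃ m, n = 2*m := by obtain ⟨m, hm⟩ := h; exact ⟨m, by omega⟩
    match m with
    | 0 =>
      have e0 : P μ γ 0 lam = 1 := by
        have h0 := P_even μ γ lam 0
        norm_num [laguerre_zero] at h0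
        rw [div_self hΓ1.ne', Real.sqrt_one] at h0
        exact h0
      have e1 : P μ γ 1 lam = (lam - γ)/Real.sqrt (2*μ+1) := by
        have h1 := P_odd μ γ lam 0
        norm_num [laguerre_zero] at h1
        rw [div_self hΓ3.ne', Real.sqrt_one] at h1
        simpa using h1
      have hm1 : munum μ 1 = 2*μ+1 := by simp [munum]; ring
      norm_num [e0, e1, hm1]
      field_simp
      ring
    | m+1 =>
      rw [if_neg (by omega : ¬(2*(m+1) = 0)), show 2*(m+1) - 1 = 2*m+1 by omega]
      rw [P_even μ γ lam (m+1), P_odd μ γ lam (m+1), P_odd μ γ lam m]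
      have hA := lagA (μ-1/2) ((lam^2 - γ^2)/2) hα m
      rw [earg] at hA
      rw [hA]
      have hS1' := S1 μ hμ (m+1)
      have hS2' := S2 μ hμ m
      have hp2 : (-1:ℝ)^(2*(m+1)) = 1 := by rw [pow_mul]; norm_num
      have hp1 : (-1:ℝ)^(m+1) = -(-1:ℝ)^m := by rw [pow_succ]; ring
      rw [hp2, hp1]
      set L1 := laguerre (μ+1/2) (m+1) ((lam^2-γ^2)/2) with hL1
      set L0 := laguerre (μ+1/2) m ((lam^2-γ^2)/2) with hL0
      set sA1 := Real.sqrt ((Nat.factorial (m+1) : ℝ) * Real.Gamma (μ+1/2) /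
        Real.Gamma (((m+1:ℕ):ℝ)+μ+1/2)) with hsA1
      set sB1 := Real.sqrt ((Nat.factorial (m+1) : ℝ) * Real.Gamma (μ+3/2) /
        Real.Gamma (((m+1:ℕ):ℝ)+μ+3/2)) with hsB1
      set sC := Real.sqrt ((Nat.factorial m : ℝ) * Real.Gamma (μ+3/2) /
        Real.Gamma (((m:ℕ):ℝ)+μ+3/2)) with hsC
      set M1 := Real.sqrt (munum μ (2*(m+1)+1)) with hM1
      set M0 := Real.sqrt (munum μ (2*(m+1))) with hM0
      set r := Real.sqrt (2*μ+1) with hrr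
      field_simp
      linear_combination ((lam - γ) * L1) * hS1'
        + (-(lam - γ) * L0) * hS2'
  · obtain ⟨m, rfl⟩ := h
    rw [if_neg (by omega : ¬(2*m+1 = 0)), show 2*m+1 - 1 = 2*m by omega,
      show 2*m+1+1 = 2*(m+1) by omega]
    rw [P_odd μ γ lam m, P_even μ γ lam (m+1), P_even μ γ lam m]
    have hB := lagB (μ-1/2) ((lam^2 - γ^2)/2) hα m
    rw [earg] at hB
    have hS3' := S3 μ hμ m
    have hS4' := S4 μ hμ m
    have hp2 : (-1:ℝ)^(2*m+1) = -1 := by rw [pow_succ, pow_mul]; norm_num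
    have hp1 : (-1:ℝ)^(m+1) = -(-1:ℝ)^m := by rw [pow_succ]; ring
    rw [hp2, hp1]
    set La1 := laguerre (μ-1/2) (m+1) ((lam^2-γ^2)/2) with hLa1
    set La0 := laguerre (μ-1/2) m ((lam^2-γ^2)/2) with hLa0
    set Lb := laguerre (μ+1/2) m ((lam^2-γ^2)/2) with hLb
    set sA1 := Real.sqrt ((Nat.factorial (m+1) : ℝ) * Real.Gamma (μ+1/2) /
      Real.Gamma (((m+1:ℕ):ℝ)+μ+1/2)) with hsA1
    set sA0 := Real.sqrt ((Nat.factorial m : ℝ) * Real.Gamma (μ+1/2) /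
      Real.Gamma (((m:ℕ):ℝ)+μ+1/2)) with hsA0
    set sC := Real.sqrt ((Nat.factorial m : ℝ) * Real.Gamma (μ+3/2) /
      Real.Gamma (((m:ℕ):ℝ)+μ+3/2)) with hsC
    set M2 := Real.sqrt (munum μ (2*(m+1))) with hM2
    set M1' := Real.sqrt (munum μ (2*m+1)) with hM1'
    set r := Real.sqrt (2*μ+1) with hrr
    field_simp
    linear_combination (La0) * hS3' + (-La1) * hS4'
      + (2 * sC) * hB

end MinusOne
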